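/- arXiv:2402.06491 — 2 statements merged into one kernel-verified Lean document; each statement's English description precedes it below -/
import Mathlib

section
/- If q in (0,1) and m \geq 2 satisfy q > (m-1)/m, then the mean number of leaves of a random m-ary branching tree, \langle k \rangle = \sum_k k P(k), where P(k) = q^k (1-q)^{Ne} \frac{1}{mNe+1}\binom{mNe+1}{Ne} with k = (m-1)Ne + 1, equals q / (1 - m(1-q)). -/
open Finset

namespace Stmt5Aux



noncomputable def bb (m n r : ℕ) : ℝ := r / (m * n + r) * ((m * n + r).choose n)

lemma bb_nonneg (m n r : ℕ) : 0 ≤ bb m n r := by unfold bb; positivity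

lemma bb_zero (m n : ℕ) : bb m n 0 = 0 := by simp [bb]

lemma bb_zero_left (m r : ℕ) (hr : 1 ≤ r) : bb m 0 r = 1 := by
  have : (r : ℝ) ≠ 0 := by exact_mod_cast Nat.one_le_iff_ne_zero.mp hr
  simp [bb, this]

lemma bb_one (m n : ℕ) : bb m n 1 = 1 / (m * n + 1) * ((m * n + 1).choose n) := by
  simp [bb]

/-- Pascal-type recurrence for `bb`. -/
lemma bb_pascal (m : ℕ) (hm : 1 ≤ m) (n r : ℕ) :
    bb m (n + 1) (r + 1) = bb m (n + 1) r + bb m n (r + m) := by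
  have hidx : m * n + (r + m) = m * (n + 1) + r := by ring
  set N := m * (n + 1) + r with hN
  have hnN : n + 1 ≤ N := by
    have : n + 1 ≤ m * (n + 1) := Nat.le_mul_of_pos_left _ hm
    omega
  have hnN' : n ≤ N := by omega
  set A : ℝ := (N.choose (n + 1) : ℝ) with hA
  set B : ℝ := (N.choose n : ℝ) with hB
  have habs : A * (n + 1) = B * ((N : ℝ) - n) := by
    have h := Nat.choose_succ_right_eq N n
    have : ((N.choose (n + 1) * (n + 1) : ℕ) : ℝ) = ((N.choose n * (N - n) : ℕ) : ℝ) := by rw [h]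
    push_cast [Nat.cast_sub hnN'] at this
    rw [hA, hB]; push_cast; linarith
  have hpas : ((N + 1).choose (n + 1) : ℝ) = B + A := by
    rw [Nat.choose_succ_succ']; push_cast; ring
  have hNR : (N : ℝ) = m * n + m + r := by rw [hN]; push_cast; ring
  have hN0 : ((N : ℝ)) ≠ 0 := by
    have : 0 < N := by omega
    positivity
  have hN1 : ((N : ℝ) + 1) ≠ 0 := by positivity
  unfold bb
  rw [hidx]
  have e1 : m * (n + 1) + (r + 1) = N + 1 := by omega
  rw [e1, hpas, ← hA, ← hB]
  push_cast
  have key : ((r:ℝ)+1) * (B + A) * (N:ℝ) = ((r:ℝ) * A + ((r:ℝ)+(m:ℝ)) * B) * ((N:ℝ)+1) := by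
    linear_combination ((m:ℝ)) * habs + (A + B) * hNR
  have d1 : ((m:ℝ) * ((n:ℝ)+1) + ((r:ℝ)+1)) = (N:ℝ)+1 := by rw [hNR]; ring
  have d2 : ((m:ℝ) * ((n:ℝ)+1) + (r:ℝ)) = (N:ℝ) := by rw [hNR]; ring
  have d3 : ((m:ℝ) * (n:ℝ) + ((r:ℝ)+(m:ℝ))) = (N:ℝ) := by rw [hNR]; ring
  rw [d1, d2, d3, div_mul_eq_mul_div, div_mul_eq_mul_div, div_mul_eq_mul_div, ← add_div,
    div_eq_div_iff hN1 hN0]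
  linear_combination key


lemma bb_one_succ (m : ℕ) (hm : 1 ≤ m) (n : ℕ) : bb m (n + 1) 1 = bb m n m := by
  have h := bb_pascal m hm n 0
  simpa [bb_zero] using h

/-- Rothe–Hagen convolution for `bb`. -/
lemma bb_conv (m : ℕ) (hm : 1 ≤ m) :
    ∀ n r s : ℕ, 1 ≤ r → 1 ≤ s →
      bb m n (r + s) = ∑ k ∈ range (n + 1), bb m k r * bb m (n - k) s := by
  intro n
  induction n using Nat.strong_induction_on with
  | _ n ih =>
    match n with
    | 0 =>
      intro r s hr hs
      simp [bb_zero_left m r hr, bb_zero_left m s hs, bb_zero_left m (r+s) (by omega)]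
    | n + 1 =>
      intro r s hr hs
      induction s, hs using Nat.le_induction with
      | base =>
        have hp := bb_pascal m hm n r
        rw [hp, ih n (by omega) r m hr hm]
        rw [Finset.sum_range_succ _ (n + 1)]
        have hterm : ∀ k ∈ range (n + 1), bb m k r * bb m (n - k) m
            = bb m k r * bb m (n + 1 - k) 1 := by
          intro k hk
          have hk' : k ≤ n := by simpa [Nat.lt_succ_iff] using hk
          have : n + 1 - k = (n - k) + 1 := by omega
          rw [this, bb_one_succ m hm]
        rw [Finset.sum_congr rfl hterm]
        simp only [Nat.sub_self, bb_zero_left m 1 le_rfl, mul_one]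
        ring
      | succ s hs ihs =>
        -- goal: bb m (n+1) (r + (s+1)) = ∑ k ∈ range (n+2), bb m k r * bb m (n+1-k) (s+1)
        have hp : bb m (n + 1) (r + s + 1) = bb m (n + 1) (r + s) + bb m n (r + s + m) := by
          have := bb_pascal m hm n (r + s)
          simpa using this
        have e : r + (s + 1) = r + s + 1 := by omega
        have e2 : r + s + m = r + (s + m) := by omega
        rw [e, hp, ihs, e2, ih n (by omega) r (s + m) hr (by omega)]
        rw [Finset.sum_range_succ (fun k => bb m k r * bb m (n + 1 - k) s) (n + 1),
          Finset.sum_range_succ (fun k => bb m k r * bb m (n + 1 - k) (s+1)) (n + 1)]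
        have h0 : bb m 0 (s + 1) = 1 := bb_zero_left m (s+1) (by omega)
        have h0' : bb m 0 s = 1 := bb_zero_left m s hs
        have hterm : ∀ k ∈ range (n + 1),
            bb m k r * bb m (n + 1 - k) (s + 1)
              = bb m k r * bb m (n + 1 - k) s + bb m k r * bb m (n - k) (s + m) := by
          intro k hk
          have hk' : k ≤ n := by simpa [Nat.lt_succ_iff] using hk
          have e1 : n + 1 - k = (n - k) + 1 := by omega
          have e2 : s + 1 = (s - 1) + 1 + 1 := by omega
          have e3 : s = (s - 1) + 1 := by omega
          rw [e1]
          rw [show s + 1 = s + 1 from rfl]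
          -- pascal: bb m ((n-k)+1) (s+1) = bb m ((n-k)+1) s + bb m (n-k) (s+m)
          have := bb_pascal m hm (n - k) s
          rw [this, ← e1]
          ring
        rw [Finset.sum_congr rfl hterm, Finset.sum_add_distrib]
        simp only [Nat.sub_self, h0, h0', mul_one]
        ring


noncomputable def xx (m : ℕ) (q : ℝ) : ℝ := (1 - q) * q ^ (m - 1)

lemma xx_nonneg (m : ℕ) (q : ℝ) (hq0 : 0 < q) (hq1 : q < 1) : 0 ≤ xx m q := by
  unfold xx
  have h1 : (0:ℝ) ≤ 1 - q := by linarith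
  have h2 : (0:ℝ) ≤ q ^ (m-1) := by positivity
  exact mul_nonneg h1 h2

lemma keyq (m : ℕ) (q : ℝ) (hm : 1 ≤ m) (hq0 : 0 < q) :
    1 + xx m q * (1 / q) ^ m = 1 / q := by
  unfold xx
  have hq : q ≠ 0 := ne_of_gt hq0
  have hqm : q ^ m = q ^ (m - 1) * q := by
    rw [← pow_succ]; congr 1; omega
  rw [one_div, inv_pow]
  field_simp
  rw [hqm]
  ring

lemma psum_le (m : ℕ) (q : ℝ) (hm : 1 ≤ m) (hq0 : 0 < q) (hq1 : q < 1) : ∀ N r : ℕ, 1 ≤ r →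
    ∑ n ∈ range N, bb m n r * xx m q ^ n ≤ (1 / q) ^ r := by
  have hxx := xx_nonneg m q hq0 hq1
  have hql : (0:ℝ) < 1/q := by positivity
  have hkey := keyq m q hm hq0
  intro N
  induction N with
  | zero => intro r hr; simp; positivity
  | succ N ihN =>
    intro r hr
    induction r, hr using Nat.le_induction with
    | base =>
      have step : ∀ i, bb m (i+1) 1 * xx m q ^ (i+1) = bb m i m * xx m q ^ i * xx m q := by
        intro i; rw [bb_one_succ m hm, pow_succ]; ring
      rw [Finset.sum_range_succ']
      simp only [step, pow_zero, mul_one, bb_zero_left m 1 le_rfl]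
      rw [← Finset.sum_mul]
      have h1 : ∑ i ∈ range N, bb m i m * xx m q ^ i ≤ (1/q)^m := ihN m hm
      have h2 : (∑ i ∈ range N, bb m i m * xx m q ^ i) * xx m q ≤ (1/q)^m * xx m q :=
        mul_le_mul_of_nonneg_right h1 hxx
      calc (∑ i ∈ range N, bb m i m * xx m q ^ i) * xx m q + 1
          ≤ (1/q)^m * xx m q + 1 := by linarith
        _ = (1/q)^1 := by rw [pow_one]; linarith [hkey]
    | succ r hr ihr =>
      have step : ∀ i, bb m (i+1) (r+1) * xx m q ^ (i+1)
          = bb m (i+1) r * xx m q ^ (i+1) + bb m i (r+m) * xx m q ^ i * xx m q := by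
        intro i; rw [bb_pascal m hm i r, pow_succ]; ring
      rw [Finset.sum_range_succ']
      simp only [step, pow_zero, mul_one, bb_zero_left m (r+1) (by omega)]
      rw [Finset.sum_add_distrib, ← Finset.sum_mul]
      have e1 : ∑ i ∈ range N, bb m (i+1) r * xx m q ^ (i+1) + 1
          = ∑ n ∈ range (N+1), bb m n r * xx m q ^ n := by
        rw [Finset.sum_range_succ']
        simp [bb_zero_left m r hr]
      have h1 : ∑ i ∈ range N, bb m (i+1) r * xx m q ^ (i+1) + 1 ≤ (1/q)^r := by
        rw [e1]; exact ihr
      have h2 : (∑ i ∈ range N, bb m i (r+m) * xx m q ^ i) * xx m q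
          ≤ (1/q)^(r+m) * xx m q :=
        mul_le_mul_of_nonneg_right (ihN (r+m) (by omega)) hxx
      have h3 : (1/q)^r + (1/q)^(r+m) * xx m q = (1/q)^(r+1) := by
        have := hkey
        calc (1/q)^r + (1/q)^(r+m) * xx m q
            = (1/q)^r * (1 + xx m q * (1/q)^m) := by rw [pow_add]; ring
          _ = (1/q)^r * (1/q) := by rw [hkey]
          _ = (1/q)^(r+1) := by rw [pow_succ]
      linarith
lemma summable_bb (m : ℕ) (q : ℝ) (hm : 1 ≤ m) (hq0 : 0 < q) (hq1 : q < 1) (r : ℕ) (hr : 1 ≤ r) :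
    Summable (fun n => bb m n r * xx m q ^ n) := by
  apply summable_of_sum_range_le (c := (1/q)^r)
  · intro n
    have := bb_nonneg m n r
    have := xx_nonneg m q hq0 hq1
    positivity
  · intro n; exact psum_le m q hm hq0 hq1 n r hr




noncomputable def sig (m : ℕ) (q : ℝ) (r : ℕ) : ℝ := ∑' n, bb m n r * xx m q ^ n

section
variable {m : ℕ} {q : ℝ}

lemma term_nonneg (hq0 : 0 < q) (hq1 : q < 1) (n r : ℕ) : 0 ≤ bb m n r * xx m q ^ n :=
  mul_nonneg (bb_nonneg m n r) (pow_nonneg (xx_nonneg m q hq0 hq1) n)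

lemma sig_nonneg (hq0 : 0 < q) (hq1 : q < 1) (r : ℕ) : 0 ≤ sig m q r :=
  tsum_nonneg (term_nonneg hq0 hq1 · r)

lemma sig_le (hm : 1 ≤ m) (hq0 : 0 < q) (hq1 : q < 1) (r : ℕ) (hr : 1 ≤ r) :
    sig m q r ≤ (1 / q) ^ r :=
  Summable.tsum_le_of_sum_range_le (summable_bb m q hm hq0 hq1 r hr)
    (fun n => psum_le m q hm hq0 hq1 n r hr)

lemma sig_one_eq (hm : 1 ≤ m) (hq0 : 0 < q) (hq1 : q < 1) :
    sig m q 1 = 1 + xx m q * sig m q m := by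
  unfold sig
  rw [Summable.tsum_eq_zero_add (summable_bb m q hm hq0 hq1 1 le_rfl)]
  congr 1
  · simp [bb_zero_left m 1 le_rfl]
  · rw [← tsum_mul_left]
    apply tsum_congr
    intro n
    rw [bb_one_succ m hm, pow_succ]
    ring

lemma summable_norm_bb (hm : 1 ≤ m) (hq0 : 0 < q) (hq1 : q < 1) (r : ℕ) (hr : 1 ≤ r) :
    Summable (fun n => ‖bb m n r * xx m q ^ n‖) := by
  apply (summable_bb m q hm hq0 hq1 r hr).congr
  intro n
  rw [Real.norm_of_nonneg (term_nonneg hq0 hq1 n r)]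

lemma sig_add (hm : 1 ≤ m) (hq0 : 0 < q) (hq1 : q < 1) (r s : ℕ) (hr : 1 ≤ r) (hs : 1 ≤ s) :
    sig m q (r + s) = sig m q r * sig m q s := by
  unfold sig
  rw [tsum_mul_tsum_eq_tsum_sum_range_of_summable_norm
    (summable_norm_bb hm hq0 hq1 r hr) (summable_norm_bb hm hq0 hq1 s hs)]
  apply tsum_congr
  intro n
  rw [bb_conv m hm n r s hr hs, Finset.sum_mul]
  apply Finset.sum_congr rfl
  intro k hk
  have hk' : k ≤ n := by simpa [Nat.lt_succ_iff] using hk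
  have : xx m q ^ k * xx m q ^ (n - k) = xx m q ^ n := by
    rw [← pow_add]; congr 1; omega
  rw [← this]
  ring

lemma sig_pow (hm : 1 ≤ m) (hq0 : 0 < q) (hq1 : q < 1) :
    ∀ r : ℕ, 1 ≤ r → sig m q r = (sig m q 1) ^ r := by
  intro r hr
  induction r, hr using Nat.le_induction with
  | base => rw [pow_one]
  | succ r hr ih =>
    rw [sig_add hm hq0 hq1 r 1 hr le_rfl] at *
    rw [ih, pow_succ]

lemma sig_one_val (hm : 1 ≤ m) (hq0 : 0 < q) (hq1 : q < 1)
    (hsub : (m : ℝ) * (1 - q) < 1) : sig m q 1 = 1 / q := by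
  set w := sig m q 1 with hw
  have hw0 : 0 ≤ w := sig_nonneg hq0 hq1 1
  have hwle : w ≤ 1 / q := by
    calc w ≤ (1/q)^1 := sig_le hm hq0 hq1 1 le_rfl
      _ = 1/q := pow_one _
  have heq : w = 1 + xx m q * w ^ m := by
    calc w = 1 + xx m q * sig m q m := sig_one_eq hm hq0 hq1
      _ = 1 + xx m q * w ^ m := by rw [sig_pow hm hq0 hq1 m hm]
  have hroot : (1:ℝ)/q = 1 + xx m q * (1/q)^m := by
    have := keyq m q hm hq0
    linarith
  set S := ∑ i ∈ range m, (1/q)^i * w^(m-1-i) with hS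
  have hgeom : (1/q)^m - w^m = S * (1/q - w) := (geom_sum₂_mul (1/q) w m).symm
  have hq' : (0:ℝ) < 1/q := by positivity
  have hSle : S ≤ (m:ℝ) * (1/q)^(m-1) := by
    rw [hS]
    calc ∑ i ∈ range m, (1/q)^i * w^(m-1-i)
        ≤ ∑ i ∈ range m, (1/q)^i * (1/q)^(m-1-i) := by
          apply Finset.sum_le_sum
          intro i hi
          exact mul_le_mul_of_nonneg_left (pow_le_pow_left₀ hw0 hwle _)
            (pow_nonneg (le_of_lt hq') i)
      _ = ∑ i ∈ range m, (1/q)^(m-1) := by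
          apply Finset.sum_congr rfl
          intro i hi
          rw [← pow_add]
          congr 1
          have : i < m := by simpa using hi
          omega
      _ = (m:ℝ) * (1/q)^(m-1) := by
          rw [Finset.sum_const, card_range, nsmul_eq_mul]
  have hS0 : 0 ≤ S := by
    rw [hS]
    apply Finset.sum_nonneg
    intro i hi
    positivity
  have hxxS : xx m q * ((m:ℝ) * (1/q)^(m-1)) = (m:ℝ) * (1 - q) := by
    unfold xx
    have : (1/q)^(m-1) = (q^(m-1))⁻¹ := by rw [one_div, inv_pow]
    rw [this]
    have hqm : (q:ℝ)^(m-1) ≠ 0 := by positivity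
    field_simp
  have hxx := xx_nonneg m q hq0 hq1
  have hfinal : (1/q - w) = (xx m q * S) * (1/q - w) := by
    calc 1/q - w = xx m q * ((1/q)^m - w^m) := by linear_combination hroot - heq
      _ = (xx m q * S) * (1/q - w) := by rw [hgeom]; ring
  have hlt : xx m q * S < 1 := by
    calc xx m q * S ≤ xx m q * ((m:ℝ) * (1/q)^(m-1)) := mul_le_mul_of_nonneg_left hSle hxx
      _ = (m:ℝ) * (1 - q) := hxxS
      _ < 1 := hsub
  nlinarith [hfinal, hlt, hwle, mul_nonneg hxx hS0]

end


noncomputable def cc (m n : ℕ) : ℝ := ((m * n).choose n : ℝ)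
noncomputable def dd (m n j : ℕ) : ℝ := ((m * n + j).choose n : ℝ)

lemma cc_nonneg (m n : ℕ) : 0 ≤ cc m n := by unfold cc; positivity

lemma cc_zero (m : ℕ) : cc m 0 = 1 := by simp [cc]

lemma dd_zero (m j : ℕ) : dd m 0 j = 1 := by simp [dd]

lemma cc_eq (m : ℕ) (hm : 1 ≤ m) (n : ℕ) :
    (((m : ℝ) - 1) * n + 1) * bb m n 1 = cc m n := by
  have h := Nat.choose_mul_succ_eq (m * n) n
  have hn : n ≤ m * n + 1 := by nlinarith [Nat.one_le_iff_ne_zero.mp hm]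
  have hcast : (cc m n) * ((m:ℝ) * n + 1)
      = (((m * n + 1).choose n : ℕ) : ℝ) * ((m:ℝ) * n + 1 - n) := by
    have : (((m * n).choose n * (m * n + 1) : ℕ) : ℝ)
        = ((((m * n + 1).choose n) * (m * n + 1 - n) : ℕ) : ℝ) := by rw [h]
    push_cast [Nat.cast_sub hn] at this
    unfold cc
    push_cast
    linarith
  rw [bb_one]
  have hpos : ((m:ℝ) * n + 1) ≠ 0 := by positivity
  field_simp
  linear_combination (-1 : ℝ) * hcast

lemma dd_one_eq (m n : ℕ) : dd m n 1 = ((m : ℝ) * n + 1) * bb m n 1 := by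
  rw [bb_one]
  have hpos : ((m:ℝ) * n + 1) ≠ 0 := by positivity
  unfold dd
  field_simp

lemma dd_pascal (m : ℕ) (n j : ℕ) :
    dd m (n + 1) (j + 1) = dd m (n + 1) j + dd m n (j + m) := by
  unfold dd
  have e1 : m * (n + 1) + (j + 1) = (m * (n + 1) + j) + 1 := by ring
  have e2 : m * n + (j + m) = m * (n + 1) + j := by ring
  rw [e1, e2, Nat.choose_succ_succ']
  push_cast
  ring

lemma dd_conv (m : ℕ) (hm : 1 ≤ m) :
    ∀ n j : ℕ, 1 ≤ j →
      dd m n j = ∑ k ∈ range (n + 1), cc m k * bb m (n - k) j := by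
  intro n
  induction n using Nat.strong_induction_on with
  | _ n ih =>
    match n with
    | 0 =>
      intro j hj
      simp [dd_zero, cc_zero, bb_zero_left m j hj]
    | n + 1 =>
      intro j hj
      induction j, hj using Nat.le_induction with
      | base =>
        have hp : dd m (n + 1) 1 = cc m (n + 1) + dd m n m := by
          unfold dd cc
          have e1 : m * (n + 1) + 1 = (m * (n + 1)) + 1 := rfl
          have e2 : m * n + m = m * (n + 1) := by ring
          rw [e1, e2, Nat.choose_succ_succ']
          push_cast
          ring
        rw [hp, ih n (by omega) m hm]
        rw [Finset.sum_range_succ _ (n + 1)]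
        have hterm : ∀ k ∈ range (n + 1), cc m k * bb m (n - k) m
            = cc m k * bb m (n + 1 - k) 1 := by
          intro k hk
          have hk' : k ≤ n := by simpa [Nat.lt_succ_iff] using hk
          have : n + 1 - k = (n - k) + 1 := by omega
          rw [this, bb_one_succ m hm]
        rw [Finset.sum_congr rfl hterm]
        simp only [Nat.sub_self, bb_zero_left m 1 le_rfl, mul_one]
        ring
      | succ j hj ihj =>
        have hp : dd m (n + 1) (j + 1) = dd m (n + 1) j + dd m n (j + m) :=
          dd_pascal m n j
        rw [hp, ihj, ih n (by omega) (j + m) (by omega)]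
        rw [Finset.sum_range_succ (fun k => cc m k * bb m (n + 1 - k) j) (n + 1),
          Finset.sum_range_succ (fun k => cc m k * bb m (n + 1 - k) (j + 1)) (n + 1)]
        have h0 : bb m 0 (j + 1) = 1 := bb_zero_left m (j + 1) (by omega)
        have h0' : bb m 0 j = 1 := bb_zero_left m j hj
        have hterm : ∀ k ∈ range (n + 1),
            cc m k * bb m (n + 1 - k) (j + 1)
              = cc m k * bb m (n + 1 - k) j + cc m k * bb m (n - k) (j + m) := by
          intro k hk
          have hk' : k ≤ n := by simpa [Nat.lt_succ_iff] using hk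
          have e1 : n + 1 - k = (n - k) + 1 := by omega
          rw [e1, bb_pascal m hm (n - k) j, ← e1]
          ring
        rw [Finset.sum_congr rfl hterm, Finset.sum_add_distrib]
        simp only [Nat.sub_self, h0, h0', mul_one]
        ring

/-- Interchange of summation over a triangle. -/
lemma sum_triangle (f : ℕ → ℕ → ℝ) :
    ∀ N : ℕ, ∑ n ∈ range N, ∑ k ∈ range (n + 1), f k (n - k)
      = ∑ k ∈ range N, ∑ j ∈ range (N - k), f k j := by
  intro N
  induction N with
  | zero => simp
  | succ N ih =>
    rw [Finset.sum_range_succ _ N, ih]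
    rw [Finset.sum_range_succ (fun k => ∑ j ∈ range (N + 1 - k), f k j) N]
    have hterm : ∀ k ∈ range N,
        (∑ j ∈ range (N + 1 - k), f k j)
          = ∑ j ∈ range (N - k), f k j + f k (N - k) := by
      intro k hk
      have hk' : k < N := by simpa using hk
      have e1 : N + 1 - k = (N - k) + 1 := by omega
      rw [e1, Finset.sum_range_succ]
    rw [Finset.sum_congr rfl hterm, Finset.sum_add_distrib]
    rw [Finset.sum_range_succ (fun k => f k (N - k)) N]
    have e : N + 1 - N = 1 := by omega
    rw [e, Finset.sum_range_one]
    simp only [Nat.sub_self]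
    ring


section
variable {m : ℕ} {q : ℝ}

lemma mterm_eq (hm : 1 ≤ m) (n : ℕ) :
    (m : ℝ) * (cc m n * xx m q ^ n)
      = bb m n 1 * xx m q ^ n + ((m : ℝ) - 1) * (dd m n 1 * xx m q ^ n) := by
  have h1 := cc_eq m hm n
  have h2 := dd_one_eq m n
  linear_combination (-(m : ℝ) * xx m q ^ n) * h1 + (-((m : ℝ) - 1) * xx m q ^ n) * h2

lemma dd_term_eq (hm : 1 ≤ m) (n : ℕ) :
    dd m n 1 * xx m q ^ n
      = ∑ k ∈ range (n + 1), (cc m k * xx m q ^ k) * (bb m (n - k) 1 * xx m q ^ (n - k)) := by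
  rw [dd_conv m hm n 1 le_rfl, Finset.sum_mul]
  apply Finset.sum_congr rfl
  intro k hk
  have hk' : k ≤ n := by simpa [Nat.lt_succ_iff] using hk
  have hx : xx m q ^ k * xx m q ^ (n - k) = xx m q ^ n := by
    rw [← pow_add]; congr 1; omega
  rw [← hx]; ring

lemma csum_le (hm : 2 ≤ m) (hq0 : 0 < q) (hq1 : q < 1)
    (hcrit : 0 < (m : ℝ) - ((m : ℝ) - 1) * (1 / q)) :
    ∀ N : ℕ, ∑ n ∈ range N, cc m n * xx m q ^ n
      ≤ (1 / q) / ((m : ℝ) - ((m : ℝ) - 1) * (1 / q)) := by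
  intro N
  have hm1 : 1 ≤ m := by omega
  have hq' : (0:ℝ) < 1/q := by positivity
  set S := ∑ n ∈ range N, cc m n * xx m q ^ n with hS
  have hA : ∑ n ∈ range N, bb m n 1 * xx m q ^ n ≤ 1 / q := by
    have := psum_le m q hm1 hq0 hq1 N 1 le_rfl
    simpa using this
  have hD : ∑ n ∈ range N, dd m n 1 * xx m q ^ n ≤ S * (1 / q) := by
    calc ∑ n ∈ range N, dd m n 1 * xx m q ^ n
        = ∑ n ∈ range N, ∑ k ∈ range (n + 1),
            (cc m k * xx m q ^ k) * (bb m (n - k) 1 * xx m q ^ (n - k)) :=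
          Finset.sum_congr rfl (fun n _ => dd_term_eq hm1 n)
      _ = ∑ k ∈ range N, ∑ j ∈ range (N - k),
            (cc m k * xx m q ^ k) * (bb m j 1 * xx m q ^ j) :=
          sum_triangle (fun k j => (cc m k * xx m q ^ k) * (bb m j 1 * xx m q ^ j)) N
      _ = ∑ k ∈ range N, (cc m k * xx m q ^ k) * ∑ j ∈ range (N - k), bb m j 1 * xx m q ^ j := by
          apply Finset.sum_congr rfl; intro k hk; rw [Finset.mul_sum]
      _ ≤ ∑ k ∈ range N, (cc m k * xx m q ^ k) * (1 / q) := by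
          apply Finset.sum_le_sum
          intro k hk
          apply mul_le_mul_of_nonneg_left _ (mul_nonneg (cc_nonneg m k)
            (pow_nonneg (xx_nonneg m q hq0 hq1) k))
          have := psum_le m q hm1 hq0 hq1 (N - k) 1 le_rfl
          simpa using this
      _ = S * (1 / q) := by rw [hS, Finset.sum_mul]
  have hMS : (m : ℝ) * S ≤ 1 / q + ((m : ℝ) - 1) * (S * (1 / q)) := by
    have hsum : (m : ℝ) * S = ∑ n ∈ range N, bb m n 1 * xx m q ^ n
        + ((m : ℝ) - 1) * ∑ n ∈ range N, dd m n 1 * xx m q ^ n := by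
      rw [hS, Finset.mul_sum, Finset.mul_sum, ← Finset.sum_add_distrib]
      exact Finset.sum_congr rfl (fun n _ => mterm_eq hm1 n)
    rw [hsum]
    have hm1R : (0:ℝ) ≤ (m:ℝ) - 1 := by
      have : (1:ℝ) ≤ (m:ℝ) := by exact_mod_cast hm1
      linarith
    nlinarith [hD, hA]
  rw [le_div_iff₀ hcrit]
  nlinarith [hMS]

lemma summable_cc (hm : 2 ≤ m) (hq0 : 0 < q) (hq1 : q < 1)
    (hcrit : 0 < (m : ℝ) - ((m : ℝ) - 1) * (1 / q)) :
    Summable (fun n => cc m n * xx m q ^ n) := by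
  apply summable_of_sum_range_le
    (c := (1 / q) / ((m : ℝ) - ((m : ℝ) - 1) * (1 / q)))
  · intro n
    exact mul_nonneg (cc_nonneg m n) (pow_nonneg (xx_nonneg m q hq0 hq1) n)
  · exact csum_le hm hq0 hq1 hcrit

lemma gamma_val (hm : 2 ≤ m) (hq0 : 0 < q) (hq1 : q < 1)
    (hsub : (m : ℝ) * (1 - q) < 1) :
    ∑' n, cc m n * xx m q ^ n = 1 / (1 - (m : ℝ) * (1 - q)) := by
  have hm1 : 1 ≤ m := by omega
  have hq : q ≠ 0 := ne_of_gt hq0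
  have hcrit : 0 < (m : ℝ) - ((m : ℝ) - 1) * (1 / q) := by
    have h' : ((m:ℝ) - 1) * (1/q) < (m:ℝ) := by
      rw [mul_one_div, div_lt_iff₀ hq0]
      nlinarith
    linarith
  have hscc := summable_cc hm hq0 hq1 hcrit
  have hsbb := summable_bb m q hm1 hq0 hq1 1 le_rfl
  set γ := ∑' n, cc m n * xx m q ^ n with hγ
  -- Cauchy product
  have hnormcc : Summable (fun n => ‖cc m n * xx m q ^ n‖) := by
    apply hscc.congr
    intro n
    rw [Real.norm_of_nonneg (mul_nonneg (cc_nonneg m n)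
      (pow_nonneg (xx_nonneg m q hq0 hq1) n))]
  have hcauchy : γ * sig m q 1 = ∑' n, dd m n 1 * xx m q ^ n := by
    rw [hγ]
    unfold sig
    rw [tsum_mul_tsum_eq_tsum_sum_range_of_summable_norm hnormcc
      (summable_norm_bb hm1 hq0 hq1 1 le_rfl)]
    exact tsum_congr (fun n => (dd_term_eq hm1 n).symm)
  have hsdd : Summable (fun n => dd m n 1 * xx m q ^ n) := by
    have : (fun n => dd m n 1 * xx m q ^ n)
        = fun n => (1 / ((m:ℝ) - 1)) * ((m:ℝ) * (cc m n * xx m q ^ n)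
            - bb m n 1 * xx m q ^ n) := by
      funext n
      have := mterm_eq (q := q) hm1 n
      have hm2 : ((m:ℝ) - 1) ≠ 0 := by
        have : (2:ℝ) ≤ (m:ℝ) := by exact_mod_cast hm
        linarith
      field_simp
      linarith [this]
    rw [this]
    exact ((hscc.mul_left _).sub hsbb).mul_left _
  have hmain : (m : ℝ) * γ = sig m q 1 + ((m : ℝ) - 1) * (γ * sig m q 1) := by
    calc (m : ℝ) * γ = ∑' n, (m : ℝ) * (cc m n * xx m q ^ n) := by
          rw [hγ, tsum_mul_left]
      _ = ∑' n, (bb m n 1 * xx m q ^ n + ((m : ℝ) - 1) * (dd m n 1 * xx m q ^ n)) :=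
          tsum_congr (fun n => mterm_eq hm1 n)
      _ = (∑' n, bb m n 1 * xx m q ^ n) + ∑' n, ((m : ℝ) - 1) * (dd m n 1 * xx m q ^ n) :=
          Summable.tsum_add hsbb (hsdd.mul_left _)
      _ = sig m q 1 + ((m : ℝ) - 1) * (γ * sig m q 1) := by
          rw [tsum_mul_left, hcauchy]; rfl
  rw [sig_one_val hm1 hq0 hq1 hsub] at hmain
  have h1 : γ * ((m:ℝ) - ((m:ℝ) - 1) * (1/q)) = 1/q := by
    field_simp at hmain ⊢
    linarith [hmain]
  have h2 : (1 - (m : ℝ) * (1 - q)) ≠ 0 := by linarith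
  rw [eq_div_iff h2]
  have hexp : (m:ℝ) - ((m:ℝ) - 1) * (1/q) = (1 - (m:ℝ) * (1 - q)) / q := by
    field_simp; ring
  rw [hexp] at h1
  field_simp at h1
  linarith [h1]

end

end Stmt5Aux

/-- If `q ∈ (0,1)`, `m ≥ 2` and `q > (m-1)/m`, then the mean number of leaves
`∑_{Ne} ((m-1) Ne + 1) * P(Ne)`, with
`P(Ne) = q^((m-1)Ne+1) (1-q)^Ne (1/(m Ne+1)) C(m Ne + 1, Ne)`, equals `q / (1 - m(1-q))`. -/
theorem stmt_5 (m : ℕ) (hm : 2 ≤ m) (q : ℝ) (hq : q ∈ Set.Ioo (0 : ℝ) 1)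
    (hsub : ((m : ℝ) - 1) / m < q) :
    ∑' Ne : ℕ, (((m : ℝ) - 1) * Ne + 1) *
        (q ^ ((m - 1) * Ne + 1) * (1 - q) ^ Ne *
          (1 / ((m : ℝ) * Ne + 1)) * (Nat.choose (m * Ne + 1) Ne : ℝ))
      = q / (1 - (m : ℝ) * (1 - q)) := by
  obtain ⟨hq0, hq1⟩ := hq
  have hm1 : 1 ≤ m := by omega
  have hmR : (0:ℝ) < (m:ℝ) := by positivity
  have hsub' : (m : ℝ) * (1 - q) < 1 := by
    rw [div_lt_iff₀ hmR] at hsub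
    nlinarith
  have hterm : ∀ n : ℕ, (((m : ℝ) - 1) * n + 1) *
      (q ^ ((m - 1) * n + 1) * (1 - q) ^ n *
        (1 / ((m : ℝ) * n + 1)) * (Nat.choose (m * n + 1) n : ℝ))
      = q * (Stmt5Aux.cc m n * Stmt5Aux.xx m q ^ n) := by
    intro n
    have hpow : q ^ ((m - 1) * n + 1) * (1 - q) ^ n = q * Stmt5Aux.xx m q ^ n := by
      unfold Stmt5Aux.xx
      rw [mul_pow, pow_succ, pow_mul]
      ring
    have hbb : (1 / ((m : ℝ) * n + 1)) * (Nat.choose (m * n + 1) n : ℝ)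
        = Stmt5Aux.bb m n 1 := (Stmt5Aux.bb_one m n).symm
    calc (((m : ℝ) - 1) * n + 1) *
        (q ^ ((m - 1) * n + 1) * (1 - q) ^ n *
          (1 / ((m : ℝ) * n + 1)) * (Nat.choose (m * n + 1) n : ℝ))
        = (q ^ ((m - 1) * n + 1) * (1 - q) ^ n)
            * ((((m : ℝ) - 1) * n + 1) * ((1 / ((m : ℝ) * n + 1))
              * (Nat.choose (m * n + 1) n : ℝ))) := by ring
      _ = (q * Stmt5Aux.xx m q ^ n) * Stmt5Aux.cc m n := by
          rw [hpow, hbb, Stmt5Aux.cc_eq m hm1 n]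
      _ = q * (Stmt5Aux.cc m n * Stmt5Aux.xx m q ^ n) := by ring
  rw [tsum_congr hterm, tsum_mul_left,
    Stmt5Aux.gamma_val hm hq0 hq1 hsub']
  ring
end

section
/- For a branching process where each node is a leaf with probability q or has m children with probability 1-q, with q \geq (m-1)/m, the total probability \sum_{Ne=0}^{\infty} q^{(m-1)Ne+1}(1-q)^{Ne} \frac{1}{mNe+1}\binom{mNe+1}{Ne} equals 1. -/
open Finset

namespace Stmt7

noncomputable def R (m p n : ℕ) : ℝ :=
  if n = 0 then 1 else
    (p : ℝ) * (Nat.factorial (m*n+p-1) : ℝ) /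
      ((Nat.factorial n : ℝ) * (Nat.factorial ((m-1)*n+p) : ℝ))

lemma R_nonneg (m p n : ℕ) : 0 ≤ R m p n := by
  unfold R
  split
  · norm_num
  · positivity

lemma R_zero_right (m p : ℕ) : R m p 0 = 1 := by simp [R]

lemma R_zero (m n : ℕ) (hn : n ≠ 0) : R m 0 n = 0 := by
  simp [R, hn]

lemma R_eq (m p n : ℕ) (h : p ≠ 0) :
    R m p n = (p : ℝ) * (Nat.factorial (m*n+p-1) : ℝ) /
      ((Nat.factorial n : ℝ) * (Nat.factorial ((m-1)*n+p) : ℝ)) := by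
  unfold R
  split
  · rename_i hn
    subst hn
    simp only [Nat.mul_zero, Nat.zero_add, Nat.factorial_zero]
    obtain ⟨p', rfl⟩ : ∃ p', p = p' + 1 := ⟨p - 1, by omega⟩
    have : p' + 1 - 1 = p' := by omega
    rw [this, Nat.factorial_succ]
    push_cast
    have := (p'.factorial_pos)
    field_simp
  · rfl

/-- The fundamental recurrence `R (p+1) (n+1) = R p (n+1) + R (p+m) n`. -/
lemma R_rec (m p n : ℕ) (hm : 2 ≤ m) :
    R m (p+1) (n+1) = R m p (n+1) + R m (p+m) n := by
  obtain ⟨k, rfl⟩ : ∃ k, m = k + 2 := ⟨m - 2, by omega⟩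
  rcases Nat.eq_zero_or_pos p with rfl | hp
  · -- p = 0 : R 1 (n+1) = R m n
    rw [R_zero _ _ (Nat.succ_ne_zero n), R_eq _ _ _ (by omega), R_eq _ _ _ (by omega)]
    rw [show (k+2)*(n+1)+(0+1)-1 = ((k+2)*n+k+1)+1 from by
          (try simp only [show k+2-1 = k+1 from rfl]); ring_nf; try omega,
        show ((k+2)-1)*(n+1)+(0+1) = ((k+1)*n+k+1)+1 from by
          (try simp only [show k+2-1 = k+1 from rfl]); ring_nf; try omega,
        show (k+2)*n+(0+(k+2))-1 = (k+2)*n+k+1 from by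
          (try simp only [show k+2-1 = k+1 from rfl]); ring_nf; try omega,
        show ((k+2)-1)*n+(0+(k+2)) = ((k+1)*n+k+1)+1 from by
          (try simp only [show k+2-1 = k+1 from rfl]); ring_nf; try omega,
        Nat.factorial_succ (n := (k+2)*n+k+1), Nat.factorial_succ (n := n)]
    have h1 : ((((k+2)*n+k+1).factorial : ℝ)) ≠ 0 := by positivity
    have h2 : ((n.factorial : ℝ)) ≠ 0 := by positivity
    have h3 : ((((k+1)*n+k+1+1).factorial : ℝ)) ≠ 0 := by positivity
    push_cast
    field_simp
    ring
  · obtain ⟨p', rfl⟩ : ∃ p', p = p' + 1 := ⟨p - 1, by omega⟩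
    rw [R_eq _ _ _ (by omega), R_eq _ _ _ (by omega), R_eq _ _ _ (by omega)]
    rw [show (k+2)*(n+1)+(p'+1+1)-1 = ((k+2)*n+k+p'+2)+1 from by
          (try simp only [show k+2-1 = k+1 from rfl]); ring_nf; try omega,
        show ((k+2)-1)*(n+1)+(p'+1+1) = ((k+1)*n+k+p'+2)+1 from by
          (try simp only [show k+2-1 = k+1 from rfl]); ring_nf; try omega,
        show (k+2)*(n+1)+(p'+1)-1 = (k+2)*n+k+p'+2 from by
          (try simp only [show k+2-1 = k+1 from rfl]); ring_nf; try omega,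
        show ((k+2)-1)*(n+1)+(p'+1) = (k+1)*n+k+p'+2 from by
          (try simp only [show k+2-1 = k+1 from rfl]); ring_nf; try omega,
        show (k+2)*n+(p'+1+(k+2))-1 = (k+2)*n+k+p'+2 from by
          (try simp only [show k+2-1 = k+1 from rfl]); ring_nf; try omega,
        show ((k+2)-1)*n+(p'+1+(k+2)) = ((k+1)*n+k+p'+2)+1 from by
          (try simp only [show k+2-1 = k+1 from rfl]); ring_nf; try omega,
        Nat.factorial_succ (n := (k+2)*n+k+p'+2), Nat.factorial_succ (n := n),
        Nat.factorial_succ (n := (k+1)*n+k+p'+2)]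
    have h1 : ((((k+2)*n+k+p'+2).factorial : ℝ)) ≠ 0 := by positivity
    have h2 : ((n.factorial : ℝ)) ≠ 0 := by positivity
    have h3 : ((((k+1)*n+k+p'+2).factorial : ℝ)) ≠ 0 := by positivity
    push_cast
    field_simp
    ring

end Stmt7

namespace Stmt7

/-- Raney's convolution identity. -/
lemma conv (m : ℕ) (hm : 2 ≤ m) :
    ∀ n p s, ∑ k ∈ Finset.range (n+1), R m p k * R m s (n-k) = R m (p+s) n := by
  intro n
  induction n with
  | zero =>
    intro p s
    simp [R_zero_right]
  | succ n ih =>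
    intro p
    induction p with
    | zero =>
      intro s
      rw [Finset.sum_eq_single_of_mem 0 (by simp)]
      · simp [R_zero_right]
      · intro b _ hb
        rw [R_zero _ _ hb, zero_mul]
    | succ p ihp =>
      intro s
      rw [Finset.sum_range_succ']
      simp only [Nat.succ_sub_succ, Nat.sub_zero]
      have hrec : ∀ k, R m (p+1) (k+1) = R m p (k+1) + R m (p+m) k := fun k => R_rec m p k hm
      calc (∑ k ∈ Finset.range (n+1), R m (p+1) (k+1) * R m s (n-k)) + R m (p+1) 0 * R m s (n+1)
          = ((∑ k ∈ Finset.range (n+1), R m p (k+1) * R m s (n-k)) + R m p 0 * R m s (n+1))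
            + ∑ k ∈ Finset.range (n+1), R m (p+m) k * R m s (n-k) := by
            simp only [hrec, add_mul, Finset.sum_add_distrib, R_zero_right]
            ring
        _ = R m (p+s) (n+1) + R m (p+m+s) n := by
            rw [ih (p+m) s, ← ihp s]
            congr 1
            rw [Finset.sum_range_succ' (fun k => R m p k * R m s (n+1-k)) (n+1)]
            simp only [Nat.succ_sub_succ, Nat.sub_zero]
        _ = R m (p+1+s) (n+1) := by
            have := R_rec m (p+s) n hm
            rw [show p+1+s = p+s+1 from by omega, this, show p+m+s = p+s+m from by omega]

end Stmt7

namespace Stmt7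

noncomputable def Q (m p : ℕ) (x : ℝ) (N : ℕ) : ℝ := ∑ n ∈ Finset.range N, R m p n * x^n

lemma key (N : ℕ) (f g : ℕ → ℝ) :
    ∑ n ∈ Finset.range N, ∑ k ∈ Finset.range (n+1), f k * g (n-k)
      = ∑ p ∈ (Finset.range N ×ˢ Finset.range N).filter (fun p => p.1 + p.2 < N),
          f p.1 * g p.2 := by
  rw [Finset.sum_sigma']
  refine Finset.sum_nbij' (i := fun a => (a.2, a.1 - a.2)) (j := fun b => ⟨b.1 + b.2, b.1⟩)
    ?_ ?_ ?_ ?_ ?_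
  · rintro ⟨n, k⟩ h
    simp only [Finset.mem_sigma, Finset.mem_range] at h
    simp only [Finset.mem_filter, Finset.mem_product, Finset.mem_range]
    omega
  · rintro ⟨a, b⟩ h
    simp only [Finset.mem_filter, Finset.mem_product, Finset.mem_range] at h
    simp only [Finset.mem_sigma, Finset.mem_range]
    omega
  · rintro ⟨u, v⟩ h
    simp only [Finset.mem_sigma, Finset.mem_range, Finset.mem_filter, Finset.mem_product] at h
    simp only [Sigma.mk.inj_iff, heq_eq_eq, Prod.mk.injEq, and_true, true_and]
    omega
  · rintro ⟨u, v⟩ h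
    simp only [Finset.mem_sigma, Finset.mem_range, Finset.mem_filter, Finset.mem_product] at h
    simp only [Sigma.mk.inj_iff, heq_eq_eq, Prod.mk.injEq, and_true, true_and]
    omega
  · rintro ⟨n, k⟩ h
    rfl

lemma Q_up (m : ℕ) (hm : 2 ≤ m) (p s N : ℕ) (x : ℝ) (hx : 0 ≤ x) :
    Q m (p+s) x N ≤ Q m p x N * Q m s x N := by
  have h1 : Q m (p+s) x N
      = ∑ n ∈ Finset.range N, ∑ k ∈ Finset.range (n+1),
          (R m p k * x^k) * (R m s (n-k) * x^(n-k)) := by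
    unfold Q
    refine Finset.sum_congr rfl (fun n _ => ?_)
    rw [← conv m hm n p s, Finset.sum_mul]
    refine Finset.sum_congr rfl (fun k hk => ?_)
    simp only [Finset.mem_range] at hk
    rw [show (R m p k * x^k) * (R m s (n-k) * x^(n-k)) = R m p k * R m s (n-k) * (x^k * x^(n-k))
        from by ring, ← pow_add, show k + (n-k) = n from by omega]
  rw [h1, key N (fun k => R m p k * x^k) (fun k => R m s k * x^k)]
  unfold Q
  rw [Finset.sum_mul_sum, ← Finset.sum_product']
  refine Finset.sum_le_sum_of_subset_of_nonneg (Finset.filter_subset _ _) ?_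
  intro i _ _
  have := R_nonneg m p i.1
  have := R_nonneg m s i.2
  positivity

lemma Q_down (m : ℕ) (hm : 2 ≤ m) (p s N : ℕ) (x : ℝ) (hx : 0 ≤ x) :
    Q m p x N * Q m s x N ≤ Q m (p+s) x (2*N) := by
  have h1 : Q m (p+s) x (2*N)
      = ∑ n ∈ Finset.range (2*N), ∑ k ∈ Finset.range (n+1),
          (R m p k * x^k) * (R m s (n-k) * x^(n-k)) := by
    unfold Q
    refine Finset.sum_congr rfl (fun n _ => ?_)
    rw [← conv m hm n p s, Finset.sum_mul]
    refine Finset.sum_congr rfl (fun k hk => ?_)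
    simp only [Finset.mem_range] at hk
    rw [show (R m p k * x^k) * (R m s (n-k) * x^(n-k)) = R m p k * R m s (n-k) * (x^k * x^(n-k))
        from by ring, ← pow_add, show k + (n-k) = n from by omega]
  rw [h1, key (2*N) (fun k => R m p k * x^k) (fun k => R m s k * x^k)]
  unfold Q
  rw [Finset.sum_mul_sum, ← Finset.sum_product']
  refine Finset.sum_le_sum_of_subset_of_nonneg ?_ ?_
  · intro i hi
    simp only [Finset.mem_product, Finset.mem_range] at hi
    simp only [Finset.mem_filter, Finset.mem_product, Finset.mem_range]
    omega
  · intro i _ _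
    have := R_nonneg m p i.1
    have := R_nonneg m s i.2
    positivity

end Stmt7

namespace Stmt7

section Analysis

variable {m : ℕ}

lemma Q_nonneg (m p : ℕ) (x : ℝ) (hx : 0 ≤ x) (N : ℕ) : 0 ≤ Q m p x N := by
  refine Finset.sum_nonneg (fun n _ => ?_)
  have := R_nonneg m p n
  positivity

lemma Q_mono (m p : ℕ) (x : ℝ) (hx : 0 ≤ x) {N M : ℕ} (h : N ≤ M) :
    Q m p x N ≤ Q m p x M := by
  refine Finset.sum_le_sum_of_subset_of_nonneg (Finset.range_subset_range.2 h) (fun n _ _ => ?_)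
  have := R_nonneg m p n
  positivity

lemma Q_zero_le_one (m : ℕ) (x : ℝ) (hx : 0 ≤ x) (N : ℕ) : Q m 0 x N ≤ 1 := by
  cases N with
  | zero => simp [Q]
  | succ N =>
    unfold Q
    rw [Finset.sum_range_succ']
    have h1 : ∀ n ∈ Finset.range N, R m 0 (n+1) * x^(n+1) = 0 := fun n _ => by
      rw [R_zero _ _ (Nat.succ_ne_zero n), zero_mul]
    rw [Finset.sum_congr rfl h1, Finset.sum_const, R_zero_right]
    simp

lemma Q_succ (hm : 2 ≤ m) (x : ℝ) (N : ℕ) :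
    Q m 1 x (N+1) = 1 + x * Q m m x N := by
  unfold Q
  rw [Finset.sum_range_succ']
  have h1 : ∀ n, R m 1 (n+1) = R m m n := by
    intro n
    have := R_rec m 0 n hm
    rw [R_zero _ _ (Nat.succ_ne_zero n)] at this
    simpa using this
  simp only [h1, R_zero_right, pow_zero, mul_one, pow_succ]
  rw [Finset.mul_sum]
  rw [add_comm]
  congr 1
  refine Finset.sum_congr rfl (fun n _ => ?_)
  ring

lemma Q_pow_le (hm : 2 ≤ m) (x : ℝ) (hx : 0 ≤ x) (j N : ℕ) :
    Q m j x N ≤ (Q m 1 x N)^j := by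
  induction j with
  | zero => simpa using Q_zero_le_one m x hx N
  | succ j ih =>
    calc Q m (j+1) x N ≤ Q m j x N * Q m 1 x N := Q_up m hm j 1 N x hx
      _ ≤ (Q m 1 x N)^j * Q m 1 x N := by
          refine mul_le_mul_of_nonneg_right ih (Q_nonneg m 1 x hx N)
      _ = (Q m 1 x N)^(j+1) := by rw [pow_succ]

lemma Q_pow_ge (hm : 2 ≤ m) (x : ℝ) (hx : 0 ≤ x) (j N : ℕ) (hj : 1 ≤ j) :
    (Q m 1 x N)^j ≤ Q m j x (2^j * N) := by
  induction j with
  | zero => omega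
  | succ j ih =>
    rcases Nat.eq_zero_or_pos j with rfl | hj'
    · simpa using Q_mono m 1 x hx (show N ≤ 2^1*N by omega)
    calc (Q m 1 x N)^(j+1) = (Q m 1 x N)^j * Q m 1 x N := pow_succ _ _
      _ ≤ Q m j x (2^j * N) * Q m 1 x (2^j * N) := by
          refine mul_le_mul (ih hj') (Q_mono m 1 x hx ?_) (Q_nonneg m 1 x hx N)
            (Q_nonneg m j x hx _)
          calc N = 1 * N := (one_mul N).symm
            _ ≤ 2^j * N := Nat.mul_le_mul_right N (Nat.one_le_two_pow)
      _ ≤ Q m (j+1) x (2*(2^j * N)) := Q_down m hm j 1 _ x hx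
      _ = Q m (j+1) x (2^(j+1) * N) := by ring_nf

end Analysis

end Stmt7

namespace Stmt7

section Main

variable {m : ℕ} {q : ℝ}

/-- The key fixed-point fact `1 + x (1/q)^m = 1/q` for `x = q^(m-1) (1-q)`. -/
lemma fixed_point (hm : 2 ≤ m) (hq0 : 0 < q) :
    1 + (q^(m-1) * (1-q)) * (1/q)^m = 1/q := by
  have hqm : q^m = q^(m-1) * q := by
    rw [← pow_succ, show m-1+1 = m from by omega]
  have h1 : q^(m-1) ≠ 0 := by positivity
  rw [one_div, inv_pow, hqm]
  field_simp
  ring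

lemma Q_le (hm : 2 ≤ m) (hq0 : 0 < q) (hq1 : q ≤ 1) (hx : 0 ≤ q^(m-1) * (1-q)) :
    ∀ N, Q m 1 (q^(m-1) * (1-q)) N ≤ 1/q := by
  set x : ℝ := q^(m-1) * (1-q) with hxdef
  have hq_inv : (1:ℝ) ≤ 1/q := by
    rw [le_div_iff₀ hq0]; linarith
  intro N
  induction N with
  | zero => simp [Q]; linarith
  | succ N ih =>
    rw [Q_succ hm x N]
    have h1 : Q m m x N ≤ (Q m 1 x N)^m := Q_pow_le hm x hx m N
    have h2 : (Q m 1 x N)^m ≤ (1/q)^m := by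
      refine pow_le_pow_left₀ (Q_nonneg m 1 x hx N) ih m
    calc 1 + x * Q m m x N ≤ 1 + x * (1/q)^m := by nlinarith
      _ = 1/q := fixed_point hm hq0

lemma summable_one (hm : 2 ≤ m) (hq0 : 0 < q) (hq1 : q ≤ 1) (hx : 0 ≤ q^(m-1) * (1-q)) :
    Summable (fun n => R m 1 n * (q^(m-1) * (1-q))^n) := by
  refine summable_of_sum_range_le (fun n => ?_) (fun N => Q_le hm hq0 hq1 hx N)
  have := R_nonneg m 1 n
  positivity

lemma summable_m (hm : 2 ≤ m) (hq0 : 0 < q) (hq1 : q ≤ 1) (hx : 0 ≤ q^(m-1) * (1-q)) :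
    Summable (fun n => R m m n * (q^(m-1) * (1-q))^n) := by
  set x : ℝ := q^(m-1) * (1-q)
  refine summable_of_sum_range_le (fun n => ?_) (c := (1/q)^m) (fun N => ?_)
  · have := R_nonneg m m n
    positivity
  · calc (∑ i ∈ Finset.range N, R m m i * x^i) = Q m m x N := rfl
      _ ≤ (Q m 1 x N)^m := Q_pow_le hm x hx m N
      _ ≤ (1/q)^m := pow_le_pow_left₀ (Q_nonneg m 1 x hx N) (Q_le hm hq0 hq1 hx N) m

/-- The tsum `t` satisfies `t = 1 + x * t^m`. -/
lemma t_equation (hm : 2 ≤ m) (hq0 : 0 < q) (hq1 : q ≤ 1) (hx : 0 ≤ q^(m-1) * (1-q)) :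
    (∑' n, R m 1 n * (q^(m-1) * (1-q))^n)
      = 1 + (q^(m-1) * (1-q)) * (∑' n, R m 1 n * (q^(m-1) * (1-q))^n)^m := by
  set x : ℝ := q^(m-1) * (1-q) with hxdef
  set t : ℝ := ∑' n, R m 1 n * x^n with htdef
  set tm : ℝ := ∑' n, R m m n * x^n with htmdef
  have ht : Filter.Tendsto (fun N => Q m 1 x N) Filter.atTop (nhds t) :=
    (summable_one hm hq0 hq1 hx).hasSum.tendsto_sum_nat
  have htm : Filter.Tendsto (fun N => Q m m x N) Filter.atTop (nhds tm) :=
    (summable_m hm hq0 hq1 hx).hasSum.tendsto_sum_nat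
  -- t = 1 + x * tm
  have e1 : t = 1 + x * tm := by
    have l1 : Filter.Tendsto (fun N => Q m 1 x (N+1)) Filter.atTop (nhds t) :=
      ht.comp (Filter.tendsto_add_atTop_nat 1)
    have l2 : Filter.Tendsto (fun N => 1 + x * Q m m x N) Filter.atTop (nhds (1 + x * tm)) :=
      (htm.const_mul x).const_add 1
    refine tendsto_nhds_unique (l1.congr (fun N => ?_)) l2
    exact Q_succ hm x N
  -- tm = t^m
  have e2 : tm ≤ t^m := by
    refine le_of_tendsto_of_tendsto' htm (ht.pow m) (fun N => Q_pow_le hm x hx m N)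
  have e3 : t^m ≤ tm := by
    have l3 : Filter.Tendsto (fun N => Q m m x (2^m * N)) Filter.atTop (nhds tm) := by
      refine htm.comp (Filter.tendsto_atTop_mono (fun N => ?_) Filter.tendsto_id)
      calc N = 1 * N := (one_mul N).symm
        _ ≤ 2^m * N := Nat.mul_le_mul_right N (Nat.one_le_two_pow)
    refine le_of_tendsto_of_tendsto' (ht.pow m) l3 (fun N => Q_pow_ge hm x hx m N (by omega))
  rw [le_antisymm e2 e3] at e1
  exact e1

/-- Root uniqueness: `t = 1/q`. -/
lemma t_eq (hm : 2 ≤ m) (hq0 : 0 < q) (hq1 : q ≤ 1) (hmq : (m:ℝ) * (1-q) ≤ 1)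
    (hx : 0 ≤ q^(m-1) * (1-q)) :
    (∑' n, R m 1 n * (q^(m-1) * (1-q))^n) = 1/q := by
  set x : ℝ := q^(m-1) * (1-q) with hxdef
  set t : ℝ := ∑' n, R m 1 n * x^n with htdef
  have ht_eq : t = 1 + x * t^m := t_equation hm hq0 hq1 hx
  have ht_le : t ≤ 1/q := by
    refine Real.tsum_le_of_sum_range_le (fun n => ?_) (fun N => Q_le hm hq0 hq1 hx N)
    have := R_nonneg m 1 n
    positivity
  have ht_nonneg : 0 ≤ t := by
    refine tsum_nonneg (fun n => ?_)
    have := R_nonneg m 1 n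
    positivity
  by_contra hne
  have hlt : t < 1/q := lt_of_le_of_ne ht_le hne
  rcases eq_or_lt_of_le hx with hx0 | hxpos
  · -- x = 0 : then t = 1 = 1/q
    rw [← hx0] at ht_eq
    have h2 := fixed_point hm hq0 (q := q)
    rw [← hxdef, ← hx0] at h2
    simp at ht_eq h2
    exact hne (by rw [ht_eq, h2]; norm_num)
  · have hfq : 1/q = 1 + x * (1/q)^m := (fixed_point hm hq0).symm
    have hd : 1/q - t = x * ((1/q)^m - t^m) := by
      linear_combination hfq - ht_eq
    have hgeom : (1/q)^m - t^m
        = (∑ i ∈ Finset.range m, (1/q)^i * t^(m-1-i)) * (1/q - t) := (geom_sum₂_mul _ _ m).symm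
    have hSlt : (∑ i ∈ Finset.range m, (1/q)^i * t^(m-1-i)) < m * (1/q)^(m-1) := by
      have := Finset.sum_lt_sum (s := Finset.range m)
        (f := fun i => (1/q)^i * t^(m-1-i)) (g := fun i => (1/q)^(m-1))
        (fun i hi => ?_) ⟨0, Finset.mem_range.2 (by omega), ?_⟩
      · simpa [Finset.sum_const, Finset.card_range, nsmul_eq_mul] using this
      · -- (1/q)^i * t^(m-1-i) ≤ (1/q)^(m-1)
        simp only [Finset.mem_range] at hi
        calc (1/q)^i * t^(m-1-i) ≤ (1/q)^i * (1/q)^(m-1-i) := by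
              refine mul_le_mul_of_nonneg_left (pow_le_pow_left₀ ht_nonneg ht_le _) (by positivity)
          _ = (1/q)^(m-1) := by rw [← pow_add]; congr 1; omega
      · -- strict at i = 0
        simp only [pow_zero, one_mul, Nat.sub_zero]
        exact pow_lt_pow_left₀ hlt ht_nonneg (by omega)
    have hq_inv_pos : 0 < 1/q := by positivity
    have hxm : x * ((m:ℝ) * (1/q)^(m-1)) ≤ 1 := by
      have hqm1 : q^(m-1) * (1/q)^(m-1) = 1 := by
        rw [one_div, inv_pow, mul_inv_cancel₀ (by positivity)]
      calc x * ((m:ℝ) * (1/q)^(m-1)) = (m:ℝ) * (1-q) * (q^(m-1) * (1/q)^(m-1)) := by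
            rw [hxdef]; ring
        _ = (m:ℝ) * (1-q) := by rw [hqm1, mul_one]
        _ ≤ 1 := hmq
    have hdpos : 0 < 1/q - t := by linarith
    have : 1/q - t < 1/q - t := by
      calc 1/q - t = x * ((∑ i ∈ Finset.range m, (1/q)^i * t^(m-1-i)) * (1/q - t)) := by
            nth_rewrite 1 [hd]
            rw [hgeom]
        _ < x * ((m * (1/q)^(m-1)) * (1/q - t)) := by
            refine mul_lt_mul_of_pos_left ?_ hxpos
            exact mul_lt_mul_of_pos_right hSlt hdpos
        _ ≤ 1 * (1/q - t) := by
            rw [show x * ((m * (1/q)^(m-1)) * (1/q - t)) = (x * (m * (1/q)^(m-1))) * (1/q - t)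
                from by ring]
            exact mul_le_mul_of_nonneg_right hxm (le_of_lt hdpos)
        _ = 1/q - t := one_mul _
    exact absurd this (lt_irrefl _)

end Main

end Stmt7

namespace Stmt7

lemma R_one (m n : ℕ) (hm : 2 ≤ m) :
    R m 1 n = (Nat.choose (m*n+1) n : ℝ) / ((m:ℝ)*n+1) := by
  obtain ⟨k, rfl⟩ : ∃ k, m = k + 2 := ⟨m - 2, by omega⟩
  rw [R_eq _ _ _ one_ne_zero]
  have hn : n ≤ (k+2)*n+1 := by
    have : 1*n ≤ (k+2)*n := Nat.mul_le_mul_right n (by omega)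
    omega
  have hc := Nat.choose_mul_factorial_mul_factorial hn
  rw [show (k+2)*n+1-n = ((k+1)*n+1) from by ring_nf; omega,
      Nat.factorial_succ ((k+2)*n)] at hc
  have hcast : (Nat.choose ((k+2)*n+1) n : ℝ) * n.factorial * (((k+1)*n+1).factorial)
      = ((k+2)*n+1) * (((k+2)*n).factorial) := by exact_mod_cast hc
  rw [show (k+2)*n+1-1 = (k+2)*n from by omega,
      show (k+2-1)*n+1 = (k+1)*n+1 from by norm_num]
  have h1 : ((((k+2)*n).factorial : ℝ)) ≠ 0 := by positivity
  have h2 : ((n.factorial : ℝ)) ≠ 0 := by positivity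
  have h3 : ((((k+1)*n+1).factorial : ℝ)) ≠ 0 := by positivity
  have h4 : ((k:ℝ)+2)*n+1 ≠ 0 := by positivity
  rw [div_eq_div_iff (by positivity) (by positivity)]
  push_cast at hcast ⊢
  linear_combination -hcast

end Stmt7

/-- For the branching process with leaf probability `q ≥ (m-1)/m`, the total
probability `∑_{Ne} q^((m-1)Ne+1) (1-q)^Ne (1/(m Ne + 1)) C(m Ne + 1, Ne)` equals 1. -/
theorem stmt_7 (m : ℕ) (hm : 2 ≤ m) (q : ℝ)
    (hq : ((m : ℝ) - 1) / m ≤ q) (hq1 : q ≤ 1) :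
    ∑' Ne : ℕ, q ^ ((m - 1) * Ne + 1) * (1 - q) ^ Ne *
        (1 / ((m : ℝ) * Ne + 1)) * (Nat.choose (m * Ne + 1) Ne : ℝ) = 1 := by
  open Stmt7 in
  have hm2 : (2:ℝ) ≤ (m:ℝ) := by exact_mod_cast hm
  have hmpos : (0:ℝ) < m := by linarith
  have hq0 : 0 < q := by
    have h1 : (0:ℝ) < ((m:ℝ)-1)/m := div_pos (by linarith) hmpos
    linarith
  have hmq : (m:ℝ) * (1-q) ≤ 1 := by
    have h2 := (div_le_iff₀ hmpos).1 hq
    nlinarith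
  have h1q : 0 ≤ 1 - q := by linarith
  have hx : 0 ≤ q^(m-1) * (1-q) := mul_nonneg (pow_nonneg hq0.le _) h1q
  have key := t_eq hm hq0 hq1 hmq hx
  have hterm : ∀ n : ℕ, q ^ ((m - 1) * n + 1) * (1 - q) ^ n *
        (1 / ((m : ℝ) * n + 1)) * (Nat.choose (m * n + 1) n : ℝ)
      = q * (R m 1 n * (q^(m-1) * (1-q))^n) := by
    intro n
    rw [R_one m n hm, mul_pow, ← pow_mul, pow_succ]
    ring
  calc ∑' n : ℕ, q ^ ((m - 1) * n + 1) * (1 - q) ^ n *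
        (1 / ((m : ℝ) * n + 1)) * (Nat.choose (m * n + 1) n : ℝ)
      = ∑' n : ℕ, q * (R m 1 n * (q^(m-1) * (1-q))^n) := tsum_congr hterm
    _ = q * ∑' n : ℕ, R m 1 n * (q^(m-1) * (1-q))^n := tsum_mul_left
    _ = q * (1/q) := by rw [key]
    _ = 1 := by field_simp
end
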